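/- Let X be a geodesic δ-hyperbolic metric space, let g be a bijective isometry of X, and let a > 0. If there exists a point x ∈ X with d(g⁻¹x, gx) ≥ d(x, gx) + 2δ + a, then d(gⁿx, x) ≥ n·a for every integer n ≥ 1; in particular |g|_∞ ≥ a > 0, so g is a hyperbolic isometry. -/

import Mathlib

/-- A metric space is `δ`-hyperbolic if the Gromov products
`(x|y)_t = (d(x,t) + d(y,t) − d(x,y))/2` satisfy
`(x|z)_t ≥ min((x|y)_t, (y|z)_t) − δ` for all `x, y, z, t`. -/
def GromovHyperbolic (X : Type*) [MetricSpace X] (δ : ℝ) : Prop :=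
  ∀ x y z t : X,
    (dist x t + dist z t - dist x z) / 2 ≥
      min ((dist x t + dist y t - dist x y) / 2) ((dist y t + dist z t - dist y z) / 2) - δ

/-- A metric space is geodesic if every pair of points is joined by a geodesic
segment: a path `f` with `f 0 = x`, `f (dist x y) = y` which is isometric on
`[0, dist x y]`. -/
def GeodesicSpace (X : Type*) [MetricSpace X] : Prop :=
  ∀ x y : X, ∃ f : ℝ → X, f 0 = x ∧ f (dist x y) = y ∧
    ∀ s ∈ Set.Icc (0 : ℝ) (dist x y), ∀ t ∈ Set.Icc (0 : ℝ) (dist x y),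
      dist (f s) (f t) = |s - t|

/-- Let `X` be a geodesic `δ`-hyperbolic metric space, `g` a bijective
isometry of `X` and `a > 0`. If some point `x` satisfies
`d(g⁻¹x, gx) ≥ d(x, gx) + 2δ + a`, then `d(gⁿx, x) ≥ n·a` for every `n ≥ 1`; in
particular the asymptotic displacement length `|g|_∞` (the limit of `d(gⁿy, y)/n`, which
exists and is independent of `y`) satisfies `|g|_∞ ≥ a > 0`, i.e. `g` is hyperbolic. -/
theorem stmt_4 {X : Type*} [MetricSpace X] (δ : ℝ) (hδ : 0 ≤ δ)
    (hhyp : GromovHyperbolic X δ) (hgeo : GeodesicSpace X)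
    (g : X ≃ᵢ X) (a : ℝ) (ha : 0 < a) (x : X)
    (hx : dist (g⁻¹ x) (g x) ≥ dist x (g x) + 2 * δ + a) :
    (∀ n : ℕ, 1 ≤ n → (n : ℝ) * a ≤ dist ((g ^ n) x) x) ∧
    ∃ L : ℝ, a ≤ L ∧ ∀ y : X,
      Filter.Tendsto (fun n : ℕ => dist ((g ^ n) y) y / n) Filter.atTop (nhds L) := by
  clear hgeo
  set d := dist x (g x) with hd
  have gpow : ∀ (k : ℕ) (p q : X), dist ((g ^ k) p) ((g ^ k) q) = dist p q :=
    fun k p q => (g ^ k).dist_eq p q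
  have hsucc : ∀ (n : ℕ) (p : X), (g ^ (n + 1)) p = (g ^ n) (g p) := by
    intro n p; rw [pow_succ]; rfl
  have hadd : ∀ (m n : ℕ) (p : X), (g ^ (m + n)) p = (g ^ m) ((g ^ n) p) := by
    intro m n p; rw [pow_add]; rfl
  set D : ℕ → ℝ := fun n => dist ((g ^ n) x) x with hD
  have hstep : ∀ n : ℕ, dist ((g ^ (n + 1)) x) ((g ^ n) x) = d := by
    intro n; rw [hsucc, gpow, dist_comm]
  have hD1 : D 1 = d := by simp only [hD, pow_one, dist_comm]; rfl
  have h2 : dist ((g ^ 2) x) x ≥ d + 2 * δ + a := by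
    have e : dist (g⁻¹ x) (g x) = dist ((g ^ 2) x) x := by
      rw [← g.dist_eq (g⁻¹ x) (g x)]
      have h1 : g (g⁻¹ x) = x := by simp
      have h2' : g (g x) = (g ^ 2) x := by rw [hsucc 1, pow_one]
      rw [h1, h2', dist_comm]
    rw [← e]; exact hx
  have h2shift : ∀ n : ℕ, dist ((g ^ (n + 2)) x) ((g ^ n) x) ≥ d + 2 * δ + a := by
    intro n
    rw [hadd n 2 x]
    calc d + 2 * δ + a ≤ dist ((g ^ 2) x) x := h2
      _ = dist ((g ^ n) ((g ^ 2) x)) ((g ^ n) x) := (gpow n _ _).symm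
  have hda : a ≤ d := by
    have t := dist_triangle ((g ^ 2) x) (g x) x
    have e : dist ((g ^ 2) x) (g x) = d := by
      have := hstep 1; rwa [pow_one] at this
    have e2 : dist (g x) x = d := dist_comm (g x) x ▸ rfl
    linarith [h2]
  -- key induction: consecutive growth by a
  have key : ∀ n : ℕ, D (n + 1) + a ≤ D (n + 2) := by
    intro n
    induction n with
    | zero =>
      have hb2 : d + 2 * δ + a ≤ D 2 := h2
      rw [hD1]; linarith
    | succ n IH =>
      have H := hhyp ((g ^ (n + 1)) x) x ((g ^ (n + 3)) x) ((g ^ (n + 2)) x)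
      have e1 : dist ((g ^ (n + 1)) x) ((g ^ (n + 2)) x) = d := by
        rw [dist_comm]; exact hstep (n + 1)
      have e2 : dist ((g ^ (n + 3)) x) ((g ^ (n + 2)) x) = d := hstep (n + 2)
      have e3 : dist ((g ^ (n + 1)) x) ((g ^ (n + 3)) x) ≥ d + 2 * δ + a := by
        rw [dist_comm]; exact h2shift (n + 1)
      have e4 : dist ((g ^ (n + 1)) x) x = D (n + 1) := rfl
      have e5 : dist x ((g ^ (n + 2)) x) = D (n + 2) := dist_comm x _
      have e6 : dist x ((g ^ (n + 3)) x) = D (n + 3) := dist_comm x _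
      rw [e1, e2, e4, e5, e6] at H
      rcases le_total ((d + D (n + 2) - D (n + 1)) / 2)
          ((D (n + 2) + d - D (n + 3)) / 2) with hmin | hmin
      · rw [min_eq_left hmin] at H
        linarith
      · rw [min_eq_right hmin] at H
        linarith
  have hmono : ∀ n : ℕ, 1 ≤ n → (n : ℝ) * a ≤ D n := by
    intro n hn
    induction n, hn using Nat.le_induction with
    | base =>
      have : D 1 = d := hD1
      push_cast; linarith
    | succ n hn IH =>
      obtain ⟨m, rfl⟩ : ∃ m, n = m + 1 := ⟨n - 1, by omega⟩
      have hk := key m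
      push_cast at IH ⊢
      linarith
  refine ⟨hmono, ?_⟩
  have hsub : Subadditive D := by
    intro m n
    show dist ((g ^ (m + n)) x) x ≤ D m + D n
    rw [hadd m n x]
    calc dist ((g ^ m) ((g ^ n) x)) x
        ≤ dist ((g ^ m) ((g ^ n) x)) ((g ^ m) x) + dist ((g ^ m) x) x := dist_triangle _ _ _
      _ = D n + D m := by rw [gpow]
      _ = D m + D n := add_comm _ _
  have hbdd : BddBelow (Set.range fun n : ℕ => D n / n) := by
    refine ⟨0, ?_⟩
    rintro r ⟨n, rfl⟩
    exact div_nonneg dist_nonneg (Nat.cast_nonneg n)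
  refine ⟨hsub.lim, ?_, ?_⟩
  · rw [Subadditive.lim]
    refine le_csInf ⟨_, Set.mem_image_of_mem _ (Set.mem_Ici.2 (le_refl 1))⟩ ?_
    rintro b ⟨n, hn, rfl⟩
    have hn1 : (1 : ℕ) ≤ n := hn
    have hnpos : (0 : ℝ) < n := by exact_mod_cast hn1
    rw [le_div_iff₀ hnpos]
    calc a * n = (n : ℝ) * a := mul_comm _ _
      _ ≤ D n := hmono n hn1
  · intro y
    have hxlim : Filter.Tendsto (fun n : ℕ => D n / n) Filter.atTop (nhds hsub.lim) :=
      hsub.tendsto_lim hbdd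
    have hdiff : Filter.Tendsto (fun n : ℕ => dist ((g ^ n) y) y / n - D n / n)
        Filter.atTop (nhds 0) := by
      refine squeeze_zero_norm (fun n => ?_) (tendsto_const_div_atTop_nhds_zero_nat (2 * dist x y))
      have hb : |dist ((g ^ n) y) y - D n| ≤ 2 * dist x y := by
        have t1 := dist_triangle4 ((g ^ n) y) ((g ^ n) x) x y
        have t2 := dist_triangle4 ((g ^ n) x) ((g ^ n) y) y x
        rw [gpow] at t1
        rw [gpow] at t2
        have eD : D n = dist ((g ^ n) x) x := rfl
        have c1 : dist y x = dist x y := dist_comm y x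
        rw [abs_le, eD]
        constructor <;> linarith
      calc ‖dist ((g ^ n) y) y / n - D n / n‖ = |dist ((g ^ n) y) y - D n| / n := by
            rw [div_sub_div_same, Real.norm_eq_abs, abs_div, Nat.abs_cast]
        _ ≤ 2 * dist x y / n := by
            rcases Nat.eq_zero_or_pos n with rfl | hn
            · simp
            · have hnpos : (0 : ℝ) < n := by exact_mod_cast hn
              exact (div_le_div_iff_of_pos_right hnpos).2 hb
    have := hdiff.add hxlim
    rw [zero_add] at this
    refine this.congr fun n => by ring
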